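/- arXiv:alg-geom/9411013 — 2 statements merged into one kernel-verified Lean document; each statement's English description precedes it below -/
import Mathlib

section
/- (Lemma 2.3, Triangle Lemma) Let A, B, C be implication classes of an undirected graph G = (V,E) with A ≠ B and A ≠ C⁻¹, and suppose there are vertices a, b, c with (a,b) ∈ C, (a,c) ∈ B and (b,c) ∈ A. Then: (i) for every (b′,c′) ∈ A, one has (a,b′) ∈ C and (a,c′) ∈ B; (ii) if (b′,c′) ∈ A and (a′,b′) ∈ C, then (a′,c′) ∈ B; (iii) a ∉ Ã. -/
open Set

namespace TransOrient

variable {V : Type*}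

/-- `E` is the edge set of an undirected graph on the vertex type `V`:
an irreflexive and symmetric relation, given as a set of ordered pairs. -/
def IsGraph (E : Set (V × V)) : Prop :=
  (∀ a : V, (a, a) ∉ E) ∧ (∀ a b : V, (a, b) ∈ E ↔ (b, a) ∈ E)

/-- The forcing relation `Γ` on directed edges:
`(a,b) Γ (a',b')` iff (`a = a'` and `(b,b') ∉ E`) or (`b = b'` and `(a,a') ∉ E`). -/
def Gamma (E : Set (V × V)) (e e' : V × V) : Prop :=
  e ∈ E ∧ e' ∈ E ∧
    ((e.1 = e'.1 ∧ (e.2, e'.2) ∉ E) ∨ (e.2 = e'.2 ∧ (e.1, e'.1) ∉ E))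

/-- The implication classes of `G = (V,E)`: equivalence classes on `E` of
the reflexive-transitive closure of `Γ`. -/
def IsImplicationClass (E : Set (V × V)) (A : Set (V × V)) : Prop :=
  ∃ e ∈ E, A = {e' | Relation.ReflTransGen (Gamma E) e e'}

/-- `A⁻¹ = {(b,a) : (a,b) ∈ A}`. -/
def inv (A : Set (V × V)) : Set (V × V) := {p | (p.2, p.1) ∈ A}

/-- The color class `Â = A ∪ A⁻¹` of an implication class `A`. -/
def hat (A : Set (V × V)) : Set (V × V) := A ∪ inv A

/-- `Ã`: the set of vertices incident to an edge of `A`. -/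
def tilde (A : Set (V × V)) : Set V := {v | ∃ w, (v, w) ∈ A ∨ (w, v) ∈ A}

/-- A transitive orientation `E'` of a symmetric edge set `F`:
`E' ⊆ F`, `E' ∩ E'⁻¹ = ∅`, `E' ∪ E'⁻¹ = F` and `E'` is transitive. -/
def IsTransOrientation (F E' : Set (V × V)) : Prop :=
  E' ⊆ F ∧ E' ∩ inv E' = ∅ ∧ E' ∪ inv E' = F ∧
    ∀ a b c : V, (a, b) ∈ E' → (b, c) ∈ E' → (a, c) ∈ E'

/-- `G` is a comparability graph if `E` admits a transitive orientation. -/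
def IsComparability (E : Set (V × V)) : Prop :=
  ∃ E' : Set (V × V), IsTransOrientation E E'

/-- `E(X)`: the set of edges of `E` with both endpoints in `X`. -/
def edgesOn (E : Set (V × V)) (X : Set V) : Set (V × V) :=
  {p ∈ E | p.1 ∈ X ∧ p.2 ∈ X}

/-- `X` is a partitive set of `G = (V,E)`. -/
def IsPartitive (E : Set (V × V)) (X : Set V) : Prop :=
  ∀ a ∈ X, ∀ b ∈ X, ∀ c ∉ X, ((a, c) ∈ E ↔ (b, c) ∈ E)

/-- `X` is a "strong" partitive set of `G = (V,E)`. -/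
def IsStrongPartitive (E : Set (V × V)) (X : Set V) : Prop :=
  IsPartitive E X ∧
    ∀ Y : Set V, IsPartitive E Y → (Y ∩ X).Nonempty → X ⊆ Y ∨ Y ⊆ X

/-- `X` is a maximal "strong" partitive set of `G = (V,E)`: a strong partitive
set different from `V` which is maximal, for inclusion, among the strong
partitive sets different from `V`. -/
def IsMaxStrongPartitive (E : Set (V × V)) (X : Set V) : Prop :=
  IsStrongPartitive E X ∧ X ≠ Set.univ ∧
    ∀ Y : Set V, IsStrongPartitive E Y → Y ≠ Set.univ → X ⊆ Y → X = Y

/-- `X` is a partitive set of the induced subgraph `G(W) = (W, E(W))`. -/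
def IsPartitiveIn (E : Set (V × V)) (W : Set V) (X : Set V) : Prop :=
  X ⊆ W ∧ ∀ a ∈ X, ∀ b ∈ X, ∀ c ∈ W \ X,
    ((a, c) ∈ edgesOn E W ↔ (b, c) ∈ edgesOn E W)

/-- `X` is a "strong" partitive set of the induced subgraph `G(W)`. -/
def IsStrongPartitiveIn (E : Set (V × V)) (W : Set V) (X : Set V) : Prop :=
  IsPartitiveIn E W X ∧
    ∀ Y : Set V, IsPartitiveIn E W Y → (Y ∩ X).Nonempty → X ⊆ Y ∨ Y ⊆ X

/-- `X` is a maximal "strong" partitive set of the induced subgraph `G(W)`. -/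
def IsMaxStrongPartitiveIn (E : Set (V × V)) (W : Set V) (X : Set V) : Prop :=
  IsStrongPartitiveIn E W X ∧ X ≠ W ∧
    ∀ Y : Set V, IsStrongPartitiveIn E W Y → Y ≠ W → X ⊆ Y → X = Y

/-- Two directed edges lie in the same color class of `G = (V,E)`. -/
def SameColor (E : Set (V × V)) (e e' : V × V) : Prop :=
  ∃ A : Set (V × V), IsImplicationClass E A ∧ e ∈ hat A ∧ e' ∈ hat A

/-- A simplex of `G = (V,E)` given by its (finite, nonempty) vertex set `VS`:
a complete induced subgraph whose edges, for distinct unordered pairs,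
lie in distinct color classes of `G`. -/
def IsSimplex (E : Set (V × V)) (VS : Set V) : Prop :=
  VS.Finite ∧ VS.Nonempty ∧
    (∀ a ∈ VS, ∀ b ∈ VS, a ≠ b → (a, b) ∈ E) ∧
    (∀ a ∈ VS, ∀ b ∈ VS, ∀ c ∈ VS, ∀ d ∈ VS, a ≠ b → c ≠ d →
      SameColor E (a, b) (c, d) → (a = c ∧ b = d) ∨ (a = d ∧ b = c))

/-- The rank of a simplex on `r+1` vertices is `r`. -/
noncomputable def simplexRank (VS : Set V) : ℕ := VS.ncard - 1

/-- A maximal simplex: its vertex set is not properly contained in the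
vertex set of another simplex. -/
def IsMaxSimplex (E : Set (V × V)) (VS : Set V) : Prop :=
  IsSimplex E VS ∧ ∀ VS' : Set V, IsSimplex E VS' → VS ⊆ VS' → VS = VS'

/-- The multiplex `M(S)` generated by a simplex with vertex set `VS`:
the union of all color classes of `G` containing an edge of the simplex. -/
def multiplex (E : Set (V × V)) (VS : Set V) : Set (V × V) :=
  {e | ∃ A : Set (V × V), IsImplicationClass E A ∧ e ∈ hat A ∧
    ∃ a ∈ VS, ∃ b ∈ VS, a ≠ b ∧ (a, b) ∈ hat A}

/-- A maximal multiplex of `G`: a multiplex generated by a maximal simplex. -/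
def IsMaxMultiplex (E : Set (V × V)) (M : Set (V × V)) : Prop :=
  ∃ VS : Set V, IsMaxSimplex E VS ∧ M = multiplex E VS

/-- `P` is a partition of the set `W`. -/
def IsPartitionOf (W : Set V) (P : Set (Set V)) : Prop :=
  (∀ X ∈ P, X.Nonempty) ∧ ⋃₀ P = W ∧
    ∀ X ∈ P, ∀ Y ∈ P, X ≠ Y → X ∩ Y = ∅

/-- Adjacency in the quotient of the induced subgraph `G(W)` by a partition:
two distinct blocks are adjacent iff some pair of representatives is an
edge of `E(W)`. -/
def quotAdj (E : Set (V × V)) (W : Set V) (X Y : Set V) : Prop :=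
  X ≠ Y ∧ ∃ x ∈ X, ∃ y ∈ Y, (x, y) ∈ edgesOn E W

/-- A partitive set of an abstract graph with vertex set `W` and adjacency
relation `Adj`. -/
def IsPartitiveGen {α : Type*} (W : Set α) (Adj : α → α → Prop) (X : Set α) : Prop :=
  X ⊆ W ∧ ∀ a ∈ X, ∀ b ∈ X, ∀ c ∈ W \ X, (Adj a c ↔ Adj b c)

/-- An abstract graph `(W, Adj)` is indecomposable if all its partitive
sets are trivial. -/
def IndecomposableGen {α : Type*} (W : Set α) (Adj : α → α → Prop) : Prop :=
  ∀ X : Set α, IsPartitiveGen W Adj X → X.Subsingleton ∨ X = W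

/-- An isomorphism between the graphs `(Vα, Aα)` and `(Vβ, Aβ)`:
a bijection of the vertex sets preserving adjacency in both directions. -/
def GraphIso {α β : Type*} (Vα : Set α) (Aα : α → α → Prop)
    (Vβ : Set β) (Aβ : β → β → Prop) : Prop :=
  ∃ f : α → β, Set.BijOn f Vα Vβ ∧
    ∀ a ∈ Vα, ∀ b ∈ Vα, (Aα a b ↔ Aβ (f a) (f b))

/-- `(V', E')` is a subgraph of the induced subgraph `G(W)` of `G = (V,E)`. -/
def IsSubgraphOf (E : Set (V × V)) (W : Set V) (V' : Set V) (E' : Set (V × V)) : Prop :=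
  V' ⊆ W ∧ E' ⊆ edgesOn E W ∧ (∀ e ∈ E', e.1 ∈ V' ∧ e.2 ∈ V') ∧
    (∀ a b : V, (a, b) ∈ E' ↔ (b, a) ∈ E')

end TransOrient

namespace TransOrient

variable {V : Type*}

lemma gamma_symm {E : Set (V × V)} (hG : IsGraph E) : Symmetric (Gamma E) := by
  rintro ⟨a, b⟩ ⟨c, d⟩ ⟨he, hf, h⟩
  refine ⟨hf, he, ?_⟩
  rcases h with ⟨h1, h2⟩ | ⟨h1, h2⟩
  · exact Or.inl ⟨h1.symm, fun hx => h2 ((hG.2 _ _).mp hx)⟩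
  · exact Or.inr ⟨h1.symm, fun hx => h2 ((hG.2 _ _).mp hx)⟩

lemma class_subset {E A : Set (V × V)} (hA : IsImplicationClass E A) : A ⊆ E := by
  obtain ⟨e₀, he₀, rfl⟩ := hA
  intro e he
  simp only [Set.mem_setOf_eq] at he
  induction he with
  | refl => exact he₀
  | tail _ hstep _ => exact hstep.2.1

lemma class_closed {E A : Set (V × V)} (hA : IsImplicationClass E A) {e f : V × V}
    (he : e ∈ A) (h : Gamma E e f) : f ∈ A := by
  obtain ⟨e₀, he₀, rfl⟩ := hA
  exact Relation.ReflTransGen.tail he h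

lemma class_chain {E A : Set (V × V)} (hG : IsGraph E) (hA : IsImplicationClass E A)
    {e f : V × V} (he : e ∈ A) (hf : f ∈ A) :
    Relation.ReflTransGen (Gamma E) e f := by
  obtain ⟨e₀, he₀, rfl⟩ := hA
  exact (((fun {x y} h => (@Relation.ReflTransGen.stdSymm _ _ ⟨fun x y h => gamma_symm hG h⟩).symm x y h :
    Symmetric (Relation.ReflTransGen (Gamma E)))) he).trans hf

lemma class_eq_of_mem {E A B : Set (V × V)} (hG : IsGraph E)
    (hA : IsImplicationClass E A) (hB : IsImplicationClass E B)
    {e : V × V} (heA : e ∈ A) (heB : e ∈ B) : A = B := by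
  obtain ⟨a₀, ha₀, rfl⟩ := hA
  obtain ⟨b₀, hb₀, rfl⟩ := hB
  have symm := (fun {x y} h => (@Relation.ReflTransGen.stdSymm _ _ ⟨fun x y h => gamma_symm hG h⟩).symm x y h :
    Symmetric (Relation.ReflTransGen (Gamma E)))
  ext f
  simp only [Set.mem_setOf_eq] at *
  exact ⟨fun h => heB.trans ((symm heA).trans h),
         fun h => heA.trans ((symm heB).trans h)⟩

lemma gamma_swap {E : Set (V × V)} (hG : IsGraph E) {e f : V × V}
    (h : Gamma E e f) : Gamma E e.swap f.swap := by
  obtain ⟨he, hf, hor⟩ := h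
  refine ⟨(hG.2 _ _).mp he, (hG.2 _ _).mp hf, ?_⟩
  rcases hor with ⟨h1, h2⟩ | ⟨h1, h2⟩
  · exact Or.inr ⟨h1, h2⟩
  · exact Or.inl ⟨h1, h2⟩

lemma rtg_swap {E : Set (V × V)} (hG : IsGraph E) {e f : V × V}
    (h : Relation.ReflTransGen (Gamma E) e f) :
    Relation.ReflTransGen (Gamma E) e.swap f.swap := by
  induction h with
  | refl => exact .refl
  | tail _ hstep ih => exact ih.tail (gamma_swap hG hstep)

lemma class_inv {E C : Set (V × V)} (hG : IsGraph E)
    (hC : IsImplicationClass E C) : IsImplicationClass E (inv C) := by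
  obtain ⟨e₀, he₀, rfl⟩ := hC
  refine ⟨e₀.swap, (hG.2 _ _).mp he₀, ?_⟩
  ext f
  simp only [inv, Set.mem_setOf_eq]
  constructor
  · intro h
    have := rtg_swap hG h
    simpa using this
  · intro h
    have := rtg_swap hG h
    rw [Prod.swap_swap] at this; exact this

lemma inv_inv' (A : Set (V × V)) : inv (inv A) = A := rfl

lemma part_i {E : Set (V × V)} (hG : IsGraph E)
    {A B C : Set (V × V)}
    (hA : IsImplicationClass E A) (hB : IsImplicationClass E B)
    (hC : IsImplicationClass E C)
    (hAB : A ≠ B) (hAC : A ≠ inv C)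
    {a b c : V} (habC : (a, b) ∈ C) (hacB : (a, c) ∈ B) (hbcA : (b, c) ∈ A) :
    ∀ b' c' : V, (b', c') ∈ A → (a, b') ∈ C ∧ (a, c') ∈ B := by
  have key : ∀ e : V × V, Relation.ReflTransGen (Gamma E) (b, c) e →
      e ∈ A ∧ (a, e.1) ∈ C ∧ (a, e.2) ∈ B := by
    intro e h
    induction h with
    | refl => exact ⟨hbcA, habC, hacB⟩
    | @tail m e' h1 hstep ih =>
      obtain ⟨hmA, hmC, hmB⟩ := ih
      have he'A : e' ∈ A := class_closed hA hmA hstep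
      obtain ⟨hmE, he'E, hor⟩ := hstep
      obtain ⟨p, q⟩ := m
      obtain ⟨p', q'⟩ := e'
      dsimp only at *
      rcases hor with ⟨h1', h2'⟩ | ⟨h1', h2'⟩
      · subst h1'
        refine ⟨he'A, hmC, ?_⟩
        by_cases hE : (a, q') ∈ E
        · exact class_closed hB hmB ⟨class_subset hB hmB, hE, Or.inl ⟨rfl, h2'⟩⟩
        · exfalso
          have h3 : (p, a) ∈ E := (hG.2 a p).mp (class_subset hC hmC)
          have h4 : (q', a) ∉ E := fun hx => hE ((hG.2 _ _).mp hx)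
          have h5 : (p, a) ∈ A := class_closed hA he'A ⟨he'E, h3, Or.inl ⟨rfl, h4⟩⟩
          have h6 : (p, a) ∈ inv C := hmC
          exact hAC (class_eq_of_mem hG hA (class_inv hG hC) h5 h6)
      · subst h1'
        refine ⟨he'A, ?_, hmB⟩
        by_cases hE : (a, p') ∈ E
        · exact class_closed hC hmC ⟨class_subset hC hmC, hE, Or.inl ⟨rfl, h2'⟩⟩
        · exfalso
          have h3 : (q, a) ∈ E := (hG.2 a q).mp (class_subset hB hmB)
          have h4 : (p', a) ∉ E := fun hx => hE ((hG.2 _ _).mp hx)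
          have h5 : (q, a) ∈ inv A := class_closed (class_inv hG hA)
            (show (q, p') ∈ inv A from he'A)
            ⟨(hG.2 _ _).mp he'E, h3, Or.inl ⟨rfl, h4⟩⟩
          exact hAB (class_eq_of_mem hG hA hB (show (a, q) ∈ A from h5) hmB)
  intro b' c' h
  exact (key (b', c') (class_chain hG hA hbcA h)).2

end TransOrient

open TransOrient in
/-- **(Lemma 2.3, Triangle Lemma)** -/
theorem triangle_lemma
    {V : Type*} (E : Set (V × V)) (hG : IsGraph E)
    (A B C : Set (V × V))
    (hA : IsImplicationClass E A) (hB : IsImplicationClass E B)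
    (hC : IsImplicationClass E C)
    (hAB : A ≠ B) (hAC : A ≠ inv C)
    (a b c : V) (habC : (a, b) ∈ C) (hacB : (a, c) ∈ B) (hbcA : (b, c) ∈ A) :
    (∀ b' c' : V, (b', c') ∈ A → (a, b') ∈ C ∧ (a, c') ∈ B) ∧
    (∀ a' b' c' : V, (b', c') ∈ A → (a', b') ∈ C → (a', c') ∈ B) ∧
    a ∉ tilde A := by
  have hi := part_i hG hA hB hC hAB hAC habC hacB hbcA
  refine ⟨hi, ?_, ?_⟩
  · intro a' b' c' hb'c' ha'b'
    obtain ⟨hab'C, hac'B⟩ := hi b' c' hb'c'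
    by_cases hBC : B = C
    · subst hBC
      have key2 : ∀ e : V × V, Relation.ReflTransGen (Gamma E) (a, b') e →
          e ∈ B ∧ ∀ c₁ : V, (e.2, c₁) ∈ A → (e.1, c₁) ∈ B := by
        intro e h
        induction h with
        | refl => exact ⟨hab'C, fun c₁ h₁ => (hi b' c₁ h₁).2⟩
        | @tail m e' h1 hstep ih =>
          obtain ⟨hmB, hinv⟩ := ih
          have he'B : e' ∈ B := class_closed hB hmB hstep
          obtain ⟨hmE, he'E, hor⟩ := hstep
          obtain ⟨p, q⟩ := m
          obtain ⟨p', q'⟩ := e'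
          dsimp only at *
          rcases hor with ⟨h1', h2'⟩ | ⟨h1', h2'⟩
          · subst h1'
            refine ⟨he'B, fun c₁ h₁ => ?_⟩
            by_cases h2 : (q, c₁) ∈ E
            · exact hinv c₁ (class_closed hA h₁ ⟨class_subset hA h₁, h2,
                Or.inr ⟨rfl, fun hx => h2' ((hG.2 _ _).mp hx)⟩⟩)
            · by_cases h3 : (p, c₁) ∈ E
              · exact class_closed hB hmB ⟨hmE, h3, Or.inl ⟨rfl, h2⟩⟩
              · exfalso
                have h4 : (q', p) ∈ E := (hG.2 _ _).mp he'E
                have h5 : (q', p) ∈ A := class_closed hA h₁ ⟨class_subset hA h₁, h4,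
                  Or.inl ⟨rfl, fun hx => h3 ((hG.2 _ _).mp hx)⟩⟩
                have h6 : (q', p) ∈ inv B := he'B
                exact hAC (class_eq_of_mem hG hA (class_inv hG hB) h5 h6)
          · subst h1'
            refine ⟨he'B, fun c₁ h₁ => ?_⟩
            have hp : (p, c₁) ∈ B := hinv c₁ h₁
            by_cases h3 : (p', c₁) ∈ E
            · exact class_closed hB hp ⟨class_subset hB hp, h3, Or.inr ⟨rfl, h2'⟩⟩
            · exfalso
              have h4 : (q, p') ∈ E := (hG.2 _ _).mp he'E
              have h5 : (q, p') ∈ A := class_closed hA h₁ ⟨class_subset hA h₁, h4,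
                Or.inl ⟨rfl, fun hx => h3 ((hG.2 _ _).mp hx)⟩⟩
              have h6 : (q, p') ∈ inv B := he'B
              exact hAC (class_eq_of_mem hG hA (class_inv hG hB) h5 h6)
      exact (key2 (a', b') (class_chain hG hB hab'C ha'b')).2 c' hb'c'
    · have h1 : C ≠ inv A := fun h => hAC (by rw [h, inv_inv'])
      have h2 : C ≠ inv (inv B) := by rw [inv_inv']; exact fun h => hBC h.symm
      have := part_i hG hC (class_inv hG hA) (class_inv hG hB) h1 h2
        (show (c', a) ∈ inv B from hac'B)
        (show (c', b') ∈ inv A from hb'c') hab'C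
      exact (this a' b' ha'b').1
  · rintro ⟨w, hw | hw⟩
    · exact hG.1 a (class_subset hC (hi a w hw).1)
    · exact hG.1 a (class_subset hB (hi w a hw).2)
end

section
/- (Theorem 3.3) Let Â and B̂ be color classes of an undirected graph G = (V,E) such that Ã∖B̃ ≠ ∅ and B̃∖Ã ≠ ∅. Then X = Ã ∩ B̃ is a strong partitive set of G. -/
open Set

namespace TransOrient

variable {V : Type*}

section Aux33
open TransOrient

variable {V : Type*} {E A B : Set (V × V)}

private lemma esymm33 (hG : IsGraph E) {a b : V} (h : (a, b) ∈ E) : (b, a) ∈ E :=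
  (hG.2 a b).mp h

private lemma gamma_symm33 (hG : IsGraph E) : Symmetric (Gamma E) := by
  rintro e f ⟨he, hf, h | h⟩
  · exact ⟨hf, he, Or.inl ⟨h.1.symm, fun hh => h.2 (esymm33 hG hh)⟩⟩
  · exact ⟨hf, he, Or.inr ⟨h.1.symm, fun hh => h.2 (esymm33 hG hh)⟩⟩

private lemma ic_memE33 (hA : IsImplicationClass E A) {e : V × V} (he : e ∈ A) : e ∈ E := by
  obtain ⟨e₀, he₀, rfl⟩ := hA
  induction he with
  | refl => exact he₀
  | tail _ h ih => exact h.2.1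

private lemma ic_closed33 (hA : IsImplicationClass E A) {e f : V × V}
    (he : e ∈ A) (h : Gamma E e f) : f ∈ A := by
  obtain ⟨e₀, he₀, rfl⟩ := hA
  exact Relation.ReflTransGen.tail he h

private lemma ic_rtg_mem33 (hA : IsImplicationClass E A) {e g : V × V}
    (he : e ∈ A) (h : Relation.ReflTransGen (Gamma E) e g) : g ∈ A := by
  obtain ⟨e₀, he₀, rfl⟩ := hA
  exact Relation.ReflTransGen.trans he h

private lemma ic_chain33 (hG : IsGraph E) (hA : IsImplicationClass E A) {e f : V × V}
    (he : e ∈ A) (hf : f ∈ A) : Relation.ReflTransGen (Gamma E) e f := by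
  obtain ⟨e₀, he₀, rfl⟩ := hA
  exact Relation.ReflTransGen.trans
    (letI : Std.Symm (Gamma E) := ⟨fun a b h => gamma_symm33 hG h⟩; (Relation.ReflTransGen.symmetric (r := Gamma E)).symm _ _ he) hf

/-- tails of edges of `A` agree on any property that all edges of `A` respect. -/
private lemma alliff33 (hG : IsGraph E) (hA : IsImplicationClass E A) (P : V → Prop)
    (H : ∀ e ∈ A, (P e.1 ↔ P e.2)) :
    ∀ e ∈ A, ∀ f ∈ A, (P e.1 ↔ P f.1) := by
  intro e he f hf
  have hch := ic_chain33 hG hA he hf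
  clear hf
  induction hch with
  | refl => rfl
  | @tail g f hgch hgf ih =>
      have hg : g ∈ A := ic_rtg_mem33 hA he hgch
      have hf : f ∈ A := ic_closed33 hA hg hgf
      obtain ⟨_, _, ⟨h1, _⟩ | ⟨h2, _⟩⟩ := hgf
      · exact h1 ▸ ih
      · exact ih.trans ⟨fun h => (H f hf).mpr (h2 ▸ (H g hg).mp h),
          fun h => (H g hg).mpr (h2.symm ▸ (H f hf).mp h)⟩

private lemma tilde_alliff33 (hG : IsGraph E) (hA : IsImplicationClass E A) (P : V → Prop)
    (H : ∀ e ∈ A, (P e.1 ↔ P e.2)) :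
    ∀ a ∈ tilde A, ∀ b ∈ tilde A, (P a ↔ P b) := by
  rintro a ⟨wa, hwa | hwa⟩ b ⟨wb, hwb | hwb⟩
  · exact alliff33 hG hA P H _ hwa _ hwb
  · exact (alliff33 hG hA P H _ hwa _ hwb).trans (H _ hwb)
  · exact (H _ hwa).symm.trans (alliff33 hG hA P H _ hwa _ hwb)
  · exact ((H _ hwa).symm.trans (alliff33 hG hA P H _ hwa _ hwb)).trans (H _ hwb)

private lemma exists_cross33 (hG : IsGraph E) (hA : IsImplicationClass E A) (P : V → Prop)
    {x q : V} (hx : x ∈ tilde A) (hPx : P x) (hq : q ∈ tilde A) (hPq : ¬ P q) :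
    ∃ e ∈ A, P e.1 ∧ ¬ P e.2 ∨ ¬ P e.1 ∧ P e.2 := by
  by_contra h
  push_neg at h
  have H : ∀ e ∈ A, (P e.1 ↔ P e.2) := by
    intro e he
    obtain ⟨h1', h2'⟩ := h e he
    exact ⟨h1', fun hp => by_contra fun hne => h2' hne hp⟩
  exact hPq ((tilde_alliff33 hG hA P H x hx q hq).mp hPx)

/-- every edge of `A` respects adjacency to a vertex outside `tilde A`. -/
private lemma edge_adj33 (hG : IsGraph E) (hA : IsImplicationClass E A) {c : V}
    (hc : c ∉ tilde A) : ∀ e ∈ A, ((e.1, c) ∈ E ↔ (e.2, c) ∈ E) := by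
  rintro ⟨a, b⟩ he
  have heE : (a, b) ∈ E := ic_memE33 hA he
  constructor
  · intro hac
    by_contra hbc
    have : (a, c) ∈ A := ic_closed33 hA he ⟨heE, hac, Or.inl ⟨rfl, hbc⟩⟩
    exact hc ⟨a, Or.inr this⟩
  · intro hbc
    by_contra hac
    have : (c, b) ∈ A := ic_closed33 hA he
      ⟨heE, esymm33 hG hbc, Or.inr ⟨rfl, hac⟩⟩
    exact hc ⟨b, Or.inl this⟩

/-- `tilde A` is a partitive set. -/
private lemma tilde_partitive33 (hG : IsGraph E) (hA : IsImplicationClass E A) :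
    IsPartitive E (tilde A) := by
  intro a ha b hb c hc
  exact tilde_alliff33 hG hA (fun z => (z, c) ∈ E) (edge_adj33 hG hA hc) a ha b hb

/-- if a partitive set contains both ends of an edge of an implication class,
it contains all ends of all its edges. -/
private lemma class_in_module33 (hG : IsGraph E) (hA : IsImplicationClass E A)
    {Y : Set V} (hY : IsPartitive E Y) {a b : V} (hab : (a, b) ∈ A)
    (ha : a ∈ Y) (hb : b ∈ Y) : ∀ e ∈ A, e.1 ∈ Y ∧ e.2 ∈ Y := by
  intro e he
  have hch := ic_chain33 hG hA hab he
  clear he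
  induction hch with
  | refl => exact ⟨ha, hb⟩
  | @tail g f hgch hgf ih =>
      obtain ⟨hgE, hfE, ⟨h1, h2⟩ | ⟨h1, h2⟩⟩ := hgf
      · refine ⟨h1 ▸ ih.1, ?_⟩
        by_contra hf2
        have hE1 : (g.1, f.2) ∈ E := by
          have : (f.1, f.2) ∈ E := hfE
          rwa [← h1] at this
        exact h2 ((hY g.1 ih.1 g.2 ih.2 f.2 hf2).mp hE1)
      · refine ⟨?_, h1 ▸ ih.2⟩
        by_contra hf1
        have hE1 : (g.2, f.1) ∈ E := by
          have : (f.2, f.1) ∈ E := esymm33 hG hfE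
          rwa [← h1] at this
        exact h2 ((hY g.2 ih.2 g.1 ih.1 f.1 hf1).mp hE1)

/-- The crux: a partitive set `Y` cannot contain a vertex of `tilde A ∩ tilde B`,
a vertex outside `tilde A`, while missing some vertex of `tilde A ∩ tilde B`. -/
private lemma crux33 (hG : IsGraph E)
    (hA : IsImplicationClass E A) (hB : IsImplicationClass E B)
    (h1 : (tilde A \ tilde B).Nonempty) (h2 : (tilde B \ tilde A).Nonempty)
    {Y : Set V} (hY : IsPartitive E Y) {x u v : V}
    (hxA : x ∈ tilde A) (hxB : x ∈ tilde B) (hxY : x ∈ Y)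
    (huA : u ∈ tilde A) (huB : u ∈ tilde B) (huY : u ∉ Y)
    (hvY : v ∈ Y) (hvA : v ∉ tilde A) : False := by
  obtain ⟨p, hpA, hpB⟩ := h1
  obtain ⟨q, hqB, hqA⟩ := h2
  have hAmod := tilde_partitive33 hG hA
  have hBmod := tilde_partitive33 hG hB
  -- Step 2: no edge of A has both endpoints in tilde B
  by_cases Hin : ∃ e ∈ A, e.1 ∈ tilde B ∧ e.2 ∈ tilde B
  · obtain ⟨e, he, he1, he2⟩ := Hin
    have hall := class_in_module33 hG hA hBmod (show (e.1, e.2) ∈ A from he) he1 he2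
    -- then tilde A ⊆ tilde B, contradicting p
    obtain ⟨w, hw | hw⟩ := hpA
    · exact hpB (hall (p, w) hw).1
    · exact hpB (hall (w, p) hw).2
  push_neg at Hin
  -- Step 4: every vertex of tilde A \ tilde B is adjacent to all of tilde B
  have hPB : ∀ p' ∈ tilde A, p' ∉ tilde B → ∀ b ∈ tilde B, (p', b) ∈ E := by
    -- find a B-edge crossing tilde A
    obtain ⟨e, he, hcross⟩ :=
      exists_cross33 hG hB (fun z => z ∈ tilde A) hxB hxA hqB hqA
    have heE : e ∈ E := ic_memE33 hB he
    -- get cB ∈ tilde B, cB ∉ tilde A, cB adjacent to some vertex of tilde A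
    obtain ⟨cA, cB, hcA, hcB, hadj, hcBB⟩ :
        ∃ cA cB : V, cA ∈ tilde A ∧ cB ∉ tilde A ∧ (cA, cB) ∈ E ∧ cB ∈ tilde B := by
      rcases hcross with ⟨hin, hout⟩ | ⟨hout, hin⟩
      · exact ⟨e.1, e.2, hin, hout, heE, ⟨e.1, Or.inr (by simpa using he)⟩⟩
      · exact ⟨e.2, e.1, hin, hout, esymm33 hG heE, ⟨e.2, Or.inl (by simpa using he)⟩⟩
    -- cB is adjacent to all of tilde A
    have hcBall : ∀ a ∈ tilde A, (a, cB) ∈ E := by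
      intro a ha
      exact (hAmod cA hcA a ha cB hcB).mp hadj
    intro p' hp'A hp'B b hb
    have h1 : (cB, p') ∈ E := esymm33 hG (hcBall p' hp'A)
    exact esymm33 hG ((hBmod cB hcBB b hb p' hp'B).mp h1)
  -- Step 5: v is adjacent to all of tilde A
  have hvadj : ∀ a ∈ tilde A, (v, a) ∈ E := by
    obtain ⟨e, he, hcross⟩ :=
      exists_cross33 hG hA (fun z => z ∈ Y) hxA hxY huA huY
    have heE : e ∈ E := ic_memE33 hA he
    obtain ⟨zin, zout, hzinY, hzoutY, hzadj, hzoutA⟩ :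
        ∃ zin zout : V, zin ∈ Y ∧ zout ∉ Y ∧ (zin, zout) ∈ E ∧ zout ∈ tilde A := by
      rcases hcross with ⟨hin, hout⟩ | ⟨hout, hin⟩
      · exact ⟨e.1, e.2, hin, hout, heE, ⟨e.1, Or.inr (by simpa using he)⟩⟩
      · exact ⟨e.2, e.1, hin, hout, esymm33 hG heE, ⟨e.2, Or.inl (by simpa using he)⟩⟩
    have hvz : (v, zout) ∈ E := (hY zin hzinY v hvY zout hzoutY).mp hzadj
    intro a ha
    exact esymm33 hG ((hAmod zout hzoutA a ha v hvA).mp (esymm33 hG hvz))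
  -- x and u are incident to edges of A
  obtain ⟨xw, hxe⟩ := id hxA
  obtain ⟨um, hue⟩ := id huA
  have hvxE : (v, x) ∈ E := hvadj x hxA
  -- the implication class of (v, x)
  set C : Set (V × V) := {e' | Relation.ReflTransGen (Gamma E) (v, x) e'} with hCdef
  have hC : IsImplicationClass E C := ⟨(v, x), hvxE, rfl⟩
  have hvxC : (v, x) ∈ C := Relation.ReflTransGen.refl
  rcases hxe with hxe | hxe <;> rcases hue with hue | hue
  · -- (x, xw) ∈ A, (u, um) ∈ A : apex argument on tails
    have key : ∀ f, Relation.ReflTransGen (Gamma E) (x, xw) f →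
        f ∈ A ∧ (v, f.1) ∈ C := by
      intro f hf
      induction hf with
      | refl => exact ⟨hxe, hvxC⟩
      | @tail g f hgch hgf ih =>
          have hfA : f ∈ A := ic_closed33 hA ih.1 hgf
          refine ⟨hfA, ?_⟩
          obtain ⟨hgE, hfE, ⟨e1, e2⟩ | ⟨e1, e2⟩⟩ := hgf
          · rw [← e1]; exact ih.2
          · have hf1A : f.1 ∈ tilde A := ⟨f.2, Or.inl (by simpa using hfA)⟩
            have hvf1 : (v, f.1) ∈ E := hvadj f.1 hf1A
            have hvg1 : (v, g.1) ∈ E := ic_memE33 hC ih.2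
            exact Relation.ReflTransGen.tail ih.2 ⟨hvg1, hvf1, Or.inl ⟨rfl, e2⟩⟩
    have hvuC : (v, u) ∈ C :=
      (key (u, um) (ic_chain33 hG hA hxe hue)).2
    exact huY (class_in_module33 hG hC hY hvxC hvY hxY (v, u) hvuC).2
  · -- (x, xw) ∈ A, (um, u) ∈ A : heads agree on membership in tilde B
    have key : ∀ f, Relation.ReflTransGen (Gamma E) (x, xw) f →
        f ∈ A ∧ (f.2 ∈ tilde B ↔ xw ∈ tilde B) := by
      intro f hf
      induction hf with
      | refl => exact ⟨hxe, Iff.rfl⟩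
      | @tail g f hgch hgf ih =>
          have hfA : f ∈ A := ic_closed33 hA ih.1 hgf
          refine ⟨hfA, ?_⟩
          obtain ⟨hgE, hfE, ⟨e1, e2⟩ | ⟨e1, e2⟩⟩ := hgf
          · rw [← ih.2]
            have hf2A : f.2 ∈ tilde A := ⟨f.1, Or.inr (by simpa using hfA)⟩
            have hg2A : g.2 ∈ tilde A := ⟨g.1, Or.inr (by simpa using ih.1)⟩
            constructor
            · intro hf2B
              by_contra hg2B
              exact e2 (hPB g.2 hg2A hg2B f.2 hf2B)
            · intro hg2B
              by_contra hf2B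
              exact e2 (esymm33 hG (hPB f.2 hf2A hf2B g.2 hg2B))
          · rw [← e1]; exact ih.2
    have hxwB : xw ∈ tilde B :=
      ((key (um, u) (ic_chain33 hG hA hxe hue)).2).mp huB
    exact Hin (x, xw) hxe hxB hxwB
  · -- (xw, x) ∈ A, (u, um) ∈ A : tails agree on membership in tilde B
    have key : ∀ f, Relation.ReflTransGen (Gamma E) (xw, x) f →
        f ∈ A ∧ (f.1 ∈ tilde B ↔ xw ∈ tilde B) := by
      intro f hf
      induction hf with
      | refl => exact ⟨hxe, Iff.rfl⟩
      | @tail g f hgch hgf ih =>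
          have hfA : f ∈ A := ic_closed33 hA ih.1 hgf
          refine ⟨hfA, ?_⟩
          obtain ⟨hgE, hfE, ⟨e1, e2⟩ | ⟨e1, e2⟩⟩ := hgf
          · rw [← e1]; exact ih.2
          · rw [← ih.2]
            have hf1A : f.1 ∈ tilde A := ⟨f.2, Or.inl (by simpa using hfA)⟩
            have hg1A : g.1 ∈ tilde A := ⟨g.2, Or.inl (by simpa using ih.1)⟩
            constructor
            · intro hf1B
              by_contra hg1B
              exact e2 (hPB g.1 hg1A hg1B f.1 hf1B)
            · intro hg1B
              by_contra hf1B
              exact e2 (esymm33 hG (hPB f.1 hf1A hf1B g.1 hg1B))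
    have hxwB : xw ∈ tilde B :=
      ((key (u, um) (ic_chain33 hG hA hxe hue)).2).mp huB
    exact Hin (xw, x) hxe hxwB hxB
  · -- (xw, x) ∈ A, (um, u) ∈ A : apex argument on heads
    have key : ∀ f, Relation.ReflTransGen (Gamma E) (xw, x) f →
        f ∈ A ∧ (v, f.2) ∈ C := by
      intro f hf
      induction hf with
      | refl => exact ⟨hxe, hvxC⟩
      | @tail g f hgch hgf ih =>
          have hfA : f ∈ A := ic_closed33 hA ih.1 hgf
          refine ⟨hfA, ?_⟩
          obtain ⟨hgE, hfE, ⟨e1, e2⟩ | ⟨e1, e2⟩⟩ := hgf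
          · have hf2A : f.2 ∈ tilde A := ⟨f.1, Or.inr (by simpa using hfA)⟩
            have hvf2 : (v, f.2) ∈ E := hvadj f.2 hf2A
            have hvg2 : (v, g.2) ∈ E := ic_memE33 hC ih.2
            exact Relation.ReflTransGen.tail ih.2 ⟨hvg2, hvf2, Or.inl ⟨rfl, e2⟩⟩
          · rw [← e1]; exact ih.2
    have hvuC : (v, u) ∈ C :=
      (key (um, u) (ic_chain33 hG hA hxe hue)).2
    exact huY (class_in_module33 hG hC hY hvxC hvY hxY (v, u) hvuC).2

end Aux33

end TransOrient
open TransOrient in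
/-- **(Theorem 3.3)** If `Ã ∖ B̃ ≠ ∅` and `B̃ ∖ Ã ≠ ∅` for color classes
`Â`, `B̂`, then `Ã ∩ B̃` is a strong partitive set of `G`. -/
theorem tilde_inter_isStrongPartitive
    {V : Type*} (E : Set (V × V)) (hG : IsGraph E)
    (A B : Set (V × V)) (hA : IsImplicationClass E A) (hB : IsImplicationClass E B)
    (h1 : (tilde A \ tilde B).Nonempty) (h2 : (tilde B \ tilde A).Nonempty) :
    IsStrongPartitive E (tilde A ∩ tilde B) := by
  constructor
  · intro a ha b hb c hc
    by_cases hcA : c ∈ tilde A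
    · have hcB : c ∉ tilde B := fun h => hc ⟨hcA, h⟩
      exact tilde_partitive33 hG hB a ha.2 b hb.2 c hcB
    · exact tilde_partitive33 hG hA a ha.1 b hb.1 c hcA
  · intro Y hY hne
    obtain ⟨x, hxY, hxX⟩ := hne
    by_cases hYX : Y ⊆ tilde A ∩ tilde B
    · exact Or.inr hYX
    · left
      obtain ⟨v, hvY, hvX⟩ := Set.not_subset.mp hYX
      intro u huX
      by_contra huY
      have hvcase : v ∉ tilde A ∨ v ∉ tilde B := by
        by_contra h; push_neg at h; exact hvX ⟨h.1, h.2⟩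
      rcases hvcase with hv | hv
      · exact crux33 hG hA hB h1 h2 hY hxX.1 hxX.2 hxY huX.1 huX.2 huY hvY hv
      · exact crux33 hG hB hA h2 h1 hY hxX.2 hxX.1 hxY huX.2 huX.1 huY hvY hv
end
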